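/- Let f, g : ℝ² → ℝ be both Lebesgue integrable and square-integrable, with Fourier transforms φ_f(s) = ∫ exp(i⟨s,a⟩) f(a) da and φ_g(s) = ∫ exp(i⟨s,a⟩) g(a) da. Assume the function (t, w) ↦ |t| · φ_f(t, t w) · conj(φ_g(t, t w)) is integrable on ℝ². Then ∫_{ℝ²} f(b) g(b) db = (2π)^{-2} ∫_ℝ ∫_ℝ |t| · φ_f(t, t w) · conj(φ_g(t, t w)) dw dt. -/

import Mathlib

set_option linter.unusedSectionVars false
set_option maxHeartbeats 1000000

open MeasureTheory

noncomputable section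

open FourierTransform Real Filter
open scoped RealInnerProductSpace ComplexConjugate

open MeasureTheory FourierTransform Real Filter
open scoped RealInnerProductSpace ComplexConjugate

noncomputable section

variable {V : Type*} [NormedAddCommGroup V] [InnerProductSpace ℝ V]
  [MeasurableSpace V] [BorelSpace V] [FiniteDimensional ℝ V]

private def eK (ξ x : V) : ℂ := Complex.exp (((-2 * π * ⟪x, ξ⟫ : ℝ) : ℂ) * Complex.I)

private lemma norm_eK (ξ x : V) : ‖eK ξ x‖ = 1 := Complex.norm_exp_ofReal_mul_I _

private lemma eK_cont (ξ : V) : Continuous fun x : V => eK ξ x := by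
  unfold eK
  have h1 : Continuous fun x : V => ⟪x, ξ⟫ := continuous_id.inner continuous_const
  exact Complex.continuous_exp.comp
    ((Complex.continuous_ofReal.comp (continuous_const.mul h1)).mul continuous_const)

private lemma eK_add (ξ x y : V) : eK ξ (x + y) = eK ξ x * eK ξ y := by
  unfold eK
  rw [← Complex.exp_add]
  congr 1
  push_cast
  rw [inner_add_left]
  push_cast
  ring

private lemma eK_conj (ξ x : V) : conj (eK ξ x) = eK ξ (-x) := by
  unfold eK
  rw [← Complex.exp_conj]
  congr 1
  rw [map_mul, Complex.conj_I, Complex.conj_ofReal, inner_neg_left]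
  push_cast
  ring

private lemma fourier_eq_eK (h : V → ℂ) (ξ : V) : 𝓕 h ξ = ∫ x, eK ξ x * h x := by
  rw [Real.fourier_eq']
  simp only [smul_eq_mul, eK]

theorem parseval_core (u v : V → ℝ)
    (hu1 : Integrable u (volume : Measure V)) (hv1 : Integrable v (volume : Measure V))
    (hu2 : MemLp u 2 (volume : Measure V)) (hv2 : MemLp v 2 (volume : Measure V))
    (hH : Integrable (fun ξ : V =>
      𝓕 (fun a => (u a : ℂ)) ξ * conj (𝓕 (fun a => (v a : ℂ)) ξ)) (volume : Measure V)) :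
    ∫ ξ : V, 𝓕 (fun a => (u a : ℂ)) ξ * conj (𝓕 (fun a => (v a : ℂ)) ξ)
      = ((∫ x : V, u x * v x : ℝ) : ℂ) := by
  set uc : V → ℂ := fun a => (u a : ℂ) with huc
  set vc : V → ℂ := fun a => (v a : ℂ) with hvc
  have hucI : Integrable uc := hu1.ofReal
  have hvcI : Integrable vc := hv1.ofReal
  -- the correlation function
  set F : V → ℂ := fun x => ∫ a, vc a * uc (a + x) with hF
  -- integrability of the correlation integrand
  have h0 : Integrable (fun z : V × V => vc z.1 * uc z.2) (volume.prod volume) :=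
    hvcI.mul_prod hucI
  have hmp : MeasurePreserving (fun z : V × V => (z.1, z.1 + z.2))
      (volume.prod volume) (volume.prod volume) := measurePreserving_prod_add volume volume
  have hP : Integrable (fun z : V × V => vc z.1 * uc (z.1 + z.2)) (volume.prod volume) :=
    (hmp.integrable_comp h0.aestronglyMeasurable).2 h0
  have hPswap : Integrable (fun z : V × V => vc z.2 * uc (z.2 + z.1)) (volume.prod volume) :=
    hP.swap
  have hFint : Integrable F := by
    have := hPswap.integral_prod_left
    simpa using this
  -- continuity of F via the L² pairing
  set gmap : V → C(V, V) := fun x => ContinuousMap.mk (fun a : V => a + x)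
    (continuous_id.add continuous_const) with hgmap
  have hgm : ∀ x : V, MeasurePreserving (gmap x) volume volume :=
    fun x => measurePreserving_add_right volume x
  set uL : Lp ℝ 2 (volume : Measure V) := hu2.toLp u with huL
  set vL : Lp ℝ 2 (volume : Measure V) := hv2.toLp v with hvL
  set T : V → Lp ℝ 2 (volume : Measure V) :=
    fun x => Lp.compMeasurePreserving (gmap x) (hgm x) uL with hT
  have hgc : Continuous gmap := by
    apply ContinuousMap.continuous_of_continuous_uncurry
    exact continuous_snd.add continuous_fst
  have hTcont : Continuous T :=
    Continuous.compMeasurePreservingLp continuous_const hgc hgm (by norm_num)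
  have hGcont : Continuous fun x : V => (inner ℝ vL (T x) : ℝ) :=
    continuous_const.inner hTcont
  have hFeq : F = fun x => (((inner ℝ vL (T x) : ℝ)) : ℂ) := by
    funext x
    have h1 : (T x : V → ℝ) =ᵐ[volume] fun a => u (a + x) := by
      refine (Lp.coeFn_compMeasurePreserving uL (hgm x)).trans ?_
      exact (hgm x).quasiMeasurePreserving.ae_eq_comp (hu2.coeFn_toLp)
    have h2 : (vL : V → ℝ) =ᵐ[volume] v := hv2.coeFn_toLp
    have h3 : (inner ℝ vL (T x) : ℝ) = ∫ a, v a * u (a + x) := by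
      rw [MeasureTheory.L2.inner_def]
      refine integral_congr_ae ?_
      filter_upwards [h1, h2] with a ha1 ha2
      rw [RCLike.inner_apply, ha1, ha2]
      simp
      ring
    rw [h3]
    calc F x = ∫ a, ((v a * u (a + x) : ℝ) : ℂ) := by
          simp only [hF, huc, hvc, Complex.ofReal_mul]
      _ = ((∫ a, v a * u (a + x) : ℝ) : ℂ) := integral_ofReal
  have hFcont : Continuous F := by
    rw [hFeq]
    exact Complex.continuous_ofReal.comp hGcont
  -- Fourier transform of the correlation
  have hfour : ∀ ξ : V, 𝓕 F ξ = 𝓕 uc ξ * conj (𝓕 vc ξ) := by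
    intro ξ
    have hQ : Integrable (fun z : V × V => eK ξ z.1 * (vc z.2 * uc (z.2 + z.1)))
        (volume.prod volume) := by
      refine hPswap.bdd_mul (c := 1) ?_ (Filter.Eventually.of_forall fun z => le_of_eq (norm_eK ξ z.1))
      exact ((eK_cont ξ).comp continuous_fst).aestronglyMeasurable
    have step1 : 𝓕 F ξ = ∫ x, ∫ a, eK ξ x * (vc a * uc (a + x)) := by
      rw [fourier_eq_eK]
      congr 1; funext x
      rw [hF, ← integral_const_mul]
    have step2 : (∫ x, ∫ a, eK ξ x * (vc a * uc (a + x)))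
        = ∫ a, ∫ x, eK ξ x * (vc a * uc (a + x)) := integral_integral_swap hQ
    have inner_eval : ∀ a : V, (∫ x, eK ξ x * uc (a + x)) = eK ξ (-a) * 𝓕 uc ξ := by
      intro a
      have hxx : ∀ x : V, eK ξ x * uc (a + x) = (fun y => eK ξ (y + -a) * uc y) (a + x) := by
        intro x
        simp only
        congr 2
        abel
      calc (∫ x, eK ξ x * uc (a + x)) = ∫ x, (fun y => eK ξ (y + -a) * uc y) (a + x) :=
            integral_congr_ae (Filter.Eventually.of_forall hxx)
        _ = ∫ y, eK ξ (y + -a) * uc y := by exact integral_add_left_eq_self (fun y => eK ξ (y + -a) * uc y) a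
        _ = ∫ y, eK ξ (-a) * (eK ξ y * uc y) := by
            congr 1; funext y; rw [eK_add]; ring
        _ = eK ξ (-a) * 𝓕 uc ξ := by rw [integral_const_mul, fourier_eq_eK]
    have step3 : (∫ a, ∫ x, eK ξ x * (vc a * uc (a + x)))
        = 𝓕 uc ξ * ∫ a, eK ξ (-a) * vc a := by
      rw [← integral_const_mul]
      congr 1; funext a
      rw [show (fun x => eK ξ x * (vc a * uc (a + x)))
          = fun x => vc a * (eK ξ x * uc (a + x)) by funext x; ring]
      rw [integral_const_mul, inner_eval a]
      ring
    have step4 : conj (𝓕 vc ξ) = ∫ a, eK ξ (-a) * vc a := by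
      rw [fourier_eq_eK, ← integral_conj]
      congr 1; funext a
      rw [map_mul, eK_conj, hvc]
      simp [Complex.conj_ofReal]
    rw [step1, step2, step3, step4]
  have hF'int : Integrable (𝓕 F) :=
    hH.congr (Filter.Eventually.of_forall fun ξ => (hfour ξ).symm)
  have hinv : 𝓕⁻ (𝓕 F) 0 = F 0 := hFint.fourierInv_fourier_eq hF'int hFcont.continuousAt
  have hinv0 : 𝓕⁻ (𝓕 F) 0 = ∫ ξ, 𝓕 F ξ := by
    rw [Real.fourierInv_eq]
    simp
  have hF0 : F 0 = ((∫ x : V, u x * v x : ℝ) : ℂ) := by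
    calc F 0 = ∫ a, ((u a * v a : ℝ) : ℂ) := by
          simp only [hF, add_zero]
          congr 1; funext a
          simp only [huc, hvc, Complex.ofReal_mul]
          ring
      _ = _ := integral_ofReal
  calc (∫ ξ : V, 𝓕 uc ξ * conj (𝓕 vc ξ)) = ∫ ξ, 𝓕 F ξ :=
        integral_congr_ae (Filter.Eventually.of_forall fun ξ => (hfour ξ).symm)
    _ = F 0 := by rw [← hinv0, hinv]
    _ = _ := hF0

end

noncomputable section

open MeasureTheory FourierTransform Real Filter
open scoped RealInnerProductSpace ComplexConjugate

private def ρ2 : (EuclideanSpace ℝ (Fin 2)) ≃ᵐ ℝ × ℝ :=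
  (MeasurableEquiv.toLp 2 (Fin 2 → ℝ)).symm.trans (MeasurableEquiv.finTwoArrow)

private lemma rho2_mp : MeasurePreserving ρ2 volume volume :=
  (MeasureTheory.volume_preserving_finTwoArrow ℝ).comp
    (EuclideanSpace.volume_preserving_symm_measurableEquiv_toLp (Fin 2))

private lemma rho2_symm_mp : MeasurePreserving ρ2.symm volume volume := rho2_mp.symm ρ2

private lemma inner_rho2_symm (p q : ℝ × ℝ) :
    ⟪ρ2.symm p, ρ2.symm q⟫ = p.1 * q.1 + p.2 * q.2 := by
  simp [ρ2, PiLp.inner_apply, Fin.sum_univ_two, MeasurableEquiv.finTwoArrow,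
    MeasurableEquiv.piFinTwo, MeasurableEquiv.trans, MeasurableEquiv.symm,
    MeasurableEquiv.toLp]
  ring

end

/-- Parseval-type identity on the cone `{(t, t·w)}`: for `f, g ∈ L¹ ∩ L²(ℝ²)` with Fourier
transforms `φ_f, φ_g`, if `(t, w) ↦ |t| φ_f(t, tw) conj(φ_g(t, tw))` is integrable then
`∫ f g = (2π)⁻² ∫ t, ∫ w, |t| φ_f(t, tw) conj(φ_g(t, tw)) dw dt`. -/
theorem stmt_10 (f g : ℝ × ℝ → ℝ)
    (hf1 : Integrable f) (hg1 : Integrable g)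
    (hf2 : MemLp f 2 (volume : Measure (ℝ × ℝ)))
    (hg2 : MemLp g 2 (volume : Measure (ℝ × ℝ)))
    (φf φg : ℝ × ℝ → ℂ)
    (hφf : ∀ s : ℝ × ℝ,
      φf s = ∫ a : ℝ × ℝ, Complex.exp (Complex.I * ((s.1 * a.1 + s.2 * a.2 : ℝ) : ℂ)) * (f a : ℂ))
    (hφg : ∀ s : ℝ × ℝ,
      φg s = ∫ a : ℝ × ℝ, Complex.exp (Complex.I * ((s.1 * a.1 + s.2 * a.2 : ℝ) : ℂ)) * (g a : ℂ))
    (hcone : Integrable (fun p : ℝ × ℝ =>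
      (Complex.ofReal |p.1|) * φf (p.1, p.1 * p.2) * (starRingEnd ℂ) (φg (p.1, p.1 * p.2)))) :
    ((∫ b : ℝ × ℝ, f b * g b : ℝ) : ℂ) =
      (((2 * Real.pi : ℝ) : ℂ))⁻¹ ^ 2 *
        ∫ t : ℝ, ∫ w : ℝ,
          (Complex.ofReal |t|) * φf (t, t * w) * (starRingEnd ℂ) (φg (t, t * w)) := by
  classical
  have hpi : (2 * π) ≠ 0 := by positivity
  set u : EuclideanSpace ℝ (Fin 2) → ℝ := fun a => f (ρ2 a) with hu
  set v : EuclideanSpace ℝ (Fin 2) → ℝ := fun a => g (ρ2 a) with hv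
  have hu1 : Integrable u := (rho2_mp.integrable_comp hf1.aestronglyMeasurable).2 hf1
  have hv1 : Integrable v := (rho2_mp.integrable_comp hg1.aestronglyMeasurable).2 hg1
  have hu2 : MemLp u 2 (volume : Measure (EuclideanSpace ℝ (Fin 2))) :=
    hf2.comp_measurePreserving rho2_mp
  have hv2 : MemLp v 2 (volume : Measure (EuclideanSpace ℝ (Fin 2))) :=
    hg2.comp_measurePreserving rho2_mp
  set uc : EuclideanSpace ℝ (Fin 2) → ℂ := fun a => (u a : ℂ) with huc
  set vc : EuclideanSpace ℝ (Fin 2) → ℂ := fun a => (v a : ℂ) with hvc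
  have hucI : Integrable uc := hu1.ofReal
  have hvcI : Integrable vc := hv1.ofReal
  set σ : ℝ × ℝ → EuclideanSpace ℝ (Fin 2) := fun s => (-(2 * π)⁻¹ : ℝ) • ρ2.symm s with hσ
  -- identification of `φf, φg` with honest Fourier transforms
  have hid : ∀ (h : ℝ × ℝ → ℝ) (hc : EuclideanSpace ℝ (Fin 2) → ℂ),
      hc = (fun a => ((h (ρ2 a) : ℝ) : ℂ)) → ∀ s : ℝ × ℝ,
      (∫ a : ℝ × ℝ, Complex.exp (Complex.I * ((s.1 * a.1 + s.2 * a.2 : ℝ) : ℂ)) * (h a : ℂ))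
        = 𝓕 hc (σ s) := by
    intro h hc hhc s
    rw [fourier_eq_eK,
      ← rho2_mp.integral_comp ρ2.measurableEmbedding
        (fun a : ℝ × ℝ => Complex.exp (Complex.I * ((s.1 * a.1 + s.2 * a.2 : ℝ) : ℂ)) * (h a : ℂ))]
    congr 1
    funext b
    have h2 : ⟪ρ2.symm s, b⟫ = s.1 * (ρ2 b).1 + s.2 * (ρ2 b).2 := by
      simpa using inner_rho2_symm s (ρ2 b)
    have hinner : (-2 * π * ⟪b, σ s⟫ : ℝ) = s.1 * (ρ2 b).1 + s.2 * (ρ2 b).2 := by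
      rw [hσ]
      simp only [real_inner_smul_right]
      have h2' : (inner ℝ b (ρ2.symm s) : ℝ) = s.1 * (ρ2 b).1 + s.2 * (ρ2 b).2 :=
        (real_inner_comm (ρ2.symm s) b).trans h2
      rw [h2']
      have hone : (-2 * π) * (-(2 * π)⁻¹) = 1 := by field_simp
      calc -2 * π * (-(2 * π)⁻¹ * (s.1 * (ρ2 b).1 + s.2 * (ρ2 b).2))
          = ((-2 * π) * (-(2 * π)⁻¹)) * (s.1 * (ρ2 b).1 + s.2 * (ρ2 b).2) := by ring
        _ = _ := by rw [hone, one_mul]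
    show _ = eK (σ s) b * hc b
    rw [hhc]
    simp only [eK, hinner]
    rw [mul_comm Complex.I ((s.1 * (ρ2 b).1 + s.2 * (ρ2 b).2 : ℝ) : ℂ)]
  have hφf' : ∀ s : ℝ × ℝ, φf s = 𝓕 uc (σ s) := fun s => (hφf s).trans (hid f uc rfl s)
  have hφg' : ∀ s : ℝ × ℝ, φg s = 𝓕 vc (σ s) := fun s => (hφg s).trans (hid g vc rfl s)
  set HV : EuclideanSpace ℝ (Fin 2) → ℂ := fun ξ => 𝓕 uc ξ * conj (𝓕 vc ξ) with hHV
  -- continuity / measurability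
  have hFuc : Continuous (𝓕 uc) :=
    VectorFourier.fourierIntegral_continuous Real.continuous_fourierChar
      (by exact continuous_inner) hucI
  have hFvc : Continuous (𝓕 vc) :=
    VectorFourier.fourierIntegral_continuous Real.continuous_fourierChar
      (by exact continuous_inner) hvcI
  have hHVcont : Continuous HV := hFuc.mul (by exact continuous_star.comp hFvc)
  have hσmeas : Measurable σ := ((measurable_const_smul _).comp ρ2.symm.measurable)
  -- the cone integrand
  set K : ℝ × ℝ → ℂ := fun p => ((|p.1| : ℝ) : ℂ) * HV (σ (p.1, p.1 * p.2)) with hK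
  have hKcone : ∀ p : ℝ × ℝ, (Complex.ofReal |p.1|) * φf (p.1, p.1 * p.2) *
      (starRingEnd ℂ) (φg (p.1, p.1 * p.2)) = K p := by
    intro p
    rw [hφf', hφg', hK, hHV, mul_assoc]
  have hconeK : Integrable K := hcone.congr (Filter.Eventually.of_forall hKcone)
  have hcone' : Integrable K ((volume : Measure ℝ).prod volume) := by
    rwa [← MeasureTheory.Measure.volume_eq_prod]
  have h0ae : ∀ᵐ t : ℝ, t ≠ 0 := by
    have h1 : (volume : Measure ℝ) {0} = 0 := measure_singleton 0
    rw [ae_iff]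
    convert h1 using 2
    ext t
    simp
  -- slicewise change of variables on the cone
  have hslice : ∀ᵐ t : ℝ, Integrable (fun x => HV (σ (t, x))) (volume : Measure ℝ) ∧
      (∫ x : ℝ, ‖HV (σ (t, x))‖) = (∫ w : ℝ, ‖K (t, w)‖) ∧
      (∫ x : ℝ, HV (σ (t, x))) = ∫ w : ℝ, K (t, w) := by
    filter_upwards [hcone'.prod_right_ae, h0ae] with t hKt ht0
    have habs : |t| ≠ 0 := abs_ne_zero.mpr ht0
    have habsc : ((|t| : ℝ) : ℂ) ≠ 0 := by exact_mod_cast habs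
    have hKt' : Integrable (fun w => HV (σ (t, t * w))) volume := by
      have h2 := hKt.const_mul (((|t| : ℝ) : ℂ)⁻¹)
      refine h2.congr (Filter.Eventually.of_forall fun w => ?_)
      show _ = HV (σ (t, t * w))
      rw [hK]
      simp only
      rw [← mul_assoc, inv_mul_cancel₀ habsc, one_mul]
    have hKval : ∀ w : ℝ, K (t, w) = ((|t| : ℝ) : ℂ) * HV (σ (t, t * w)) := fun w => rfl
    refine ⟨(integrable_comp_mul_left_iff (fun x => HV (σ (t, x))) ht0).mp hKt', ?_, ?_⟩
    · have hnorm2 : (∫ w : ℝ, ‖HV (σ (t, t * w))‖) = |t⁻¹| * ∫ x, ‖HV (σ (t, x))‖ := by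
        simpa [smul_eq_mul] using
          MeasureTheory.Measure.integral_comp_mul_left (fun x => ‖HV (σ (t, x))‖) t
      have hnorm1 : (∫ w : ℝ, ‖K (t, w)‖) = |t| * ∫ w, ‖HV (σ (t, t * w))‖ := by
        rw [← integral_const_mul]
        congr 1
        funext w
        rw [hKval w, norm_mul, Complex.norm_real, Real.norm_eq_abs, abs_abs]
      rw [hnorm1, hnorm2, abs_inv]
      field_simp
    · have hint2 : (∫ w : ℝ, HV (σ (t, t * w))) = |t⁻¹| • ∫ x, HV (σ (t, x)) :=
        MeasureTheory.Measure.integral_comp_mul_left (fun x => HV (σ (t, x))) t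
      have hint1 : (∫ w : ℝ, K (t, w)) = ((|t| : ℝ) : ℂ) * ∫ w, HV (σ (t, t * w)) := by
        rw [← integral_const_mul]
      rw [hint1, hint2]
      rw [Complex.real_smul, ← mul_assoc, abs_inv]
      norm_cast
      rw [mul_inv_cancel₀ habs, Complex.ofReal_one, one_mul]
  -- integrability of the full-plane integrand
  have hHmeasp : AEStronglyMeasurable (fun s : ℝ × ℝ => HV (σ s))
      ((volume : Measure ℝ).prod volume) :=
    (hHVcont.measurable.comp hσmeas).aestronglyMeasurable
  have hHint : Integrable (fun s : ℝ × ℝ => HV (σ s))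
      ((volume : Measure ℝ).prod volume) := by
    refine (integrable_prod_iff hHmeasp).2 ⟨?_, ?_⟩
    · filter_upwards [hslice] with t h using h.1
    · refine (hcone'.integral_norm_prod_left).congr ?_
      filter_upwards [hslice] with t h
      exact h.2.1.symm
  have hHint' : Integrable (fun s : ℝ × ℝ => HV (σ s)) (volume : Measure (ℝ × ℝ)) := by
    rwa [MeasureTheory.Measure.volume_eq_prod]
  have hHint_eq : (∫ s : ℝ × ℝ, HV (σ s)) = ∫ t : ℝ, ∫ w : ℝ, K (t, w) := by
    rw [MeasureTheory.Measure.volume_eq_prod,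
      MeasureTheory.integral_prod _ hHint]
    refine integral_congr_ae ?_
    filter_upwards [hslice] with t h
    exact h.2.2
  -- transfer to Euclidean space and rescale
  have hcomp : (∫ s : ℝ × ℝ, HV (σ s))
      = ∫ x : EuclideanSpace ℝ (Fin 2), HV ((-(2 * π)⁻¹ : ℝ) • x) :=
    rho2_symm_mp.integral_comp ρ2.symm.measurableEmbedding
      (fun x => HV ((-(2 * π)⁻¹ : ℝ) • x))
  have hsmul : (∫ x : EuclideanSpace ℝ (Fin 2), HV ((-(2 * π)⁻¹ : ℝ) • x))
      = ((2 * π) ^ 2 : ℝ) • ∫ ξ, HV ξ := by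
    rw [MeasureTheory.Measure.integral_comp_smul volume HV (-(2 * π)⁻¹)]
    congr 1
    rw [finrank_euclideanSpace_fin]
    rw [show ((-(2 * π)⁻¹ : ℝ)) ^ 2 = ((2 * π) ^ 2)⁻¹ by rw [neg_sq, inv_pow]]
    rw [inv_inv, abs_of_pos (by positivity)]
  have hHVint : Integrable HV := by
    have h1 : Integrable (fun x : EuclideanSpace ℝ (Fin 2) => HV ((-(2 * π)⁻¹ : ℝ) • x)) := by
      refine (rho2_symm_mp.integrable_comp ?_).1 hHint'
      exact (hHVcont.comp (continuous_const_smul _)).aestronglyMeasurable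
    exact (MeasureTheory.integrable_comp_smul_iff volume HV
      (R := -(2 * π)⁻¹) (by simp [Real.pi_ne_zero])).1 h1
  have hpars : (∫ ξ, HV ξ) = ((∫ x, u x * v x : ℝ) : ℂ) :=
    parseval_core u v hu1 hv1 hu2 hv2 hHVint
  have hfg : (∫ x, u x * v x) = ∫ b : ℝ × ℝ, f b * g b :=
    rho2_mp.integral_comp ρ2.measurableEmbedding (fun p => f p * g p)
  -- put everything together
  have hgoalR : (∫ t : ℝ, ∫ w : ℝ, (Complex.ofReal |t|) * φf (t, t * w) *
      (starRingEnd ℂ) (φg (t, t * w))) = ∫ t : ℝ, ∫ w : ℝ, K (t, w) := by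
    congr 1
    funext t
    congr 1
    funext w
    exact hKcone (t, w)
  rw [hgoalR, ← hHint_eq, hcomp, hsmul, hpars, hfg]
  rw [Complex.real_smul]
  push_cast
  have h2πc : ((2 * π : ℝ) : ℂ) ≠ 0 := by exact_mod_cast hpi
  push_cast at h2πc
  field_simp
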